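/- Let f be C² with L-Lipschitz Hessian, and suppose ∇f(x) + (∇²f(x) + λI)d = r with λ ≤ β‖d‖/α and ‖r‖ ≤ ξ‖d‖^{1+ζ} for 0 < ζ ≤ 1. Then ‖∇f(x+d)‖ ≤ (L/2 + β/α)‖d‖² + ξ‖d‖^{1+ζ}. -/

import Mathlib

open scoped RealInnerProductSpace

open Set in
/-- Taylor bound: if the derivative of `g` is `L`-Lipschitz, then
`‖g (x + d) - g x - g' x d‖ ≤ L/2 * ‖d‖²`. -/
theorem taylor_aux {E F : Type*} [NormedAddCommGroup E] [NormedSpace ℝ E]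
    [NormedAddCommGroup F] [NormedSpace ℝ F]
    (g : E → F) (hg : Differentiable ℝ g) (L : ℝ) (hL : 0 ≤ L)
    (hLip : ∀ y z : E, ‖fderiv ℝ g y - fderiv ℝ g z‖ ≤ L * ‖y - z‖)
    (x d : E) :
    ‖g (x + d) - g x - fderiv ℝ g x d‖ ≤ L / 2 * ‖d‖ ^ 2 := by
  set φ : ℝ → F := fun t => g (x + t • d) - g x - t • (fderiv ℝ g x d) with hφ
  have hder : ∀ t : ℝ, HasDerivAt φ (fderiv ℝ g (x + t • d) d - fderiv ℝ g x d) t := by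
    intro t
    have h1 : HasDerivAt (fun t : ℝ => x + t • d) d t := by
      simpa using ((hasDerivAt_id t).smul_const d).const_add x
    have h2 : HasDerivAt (fun t : ℝ => g (x + t • d)) (fderiv ℝ g (x + t • d) d) t :=
      (hg (x + t • d)).hasFDerivAt.comp_hasDerivAt t h1
    have h3 : HasDerivAt (fun t : ℝ => t • (fderiv ℝ g x d)) (fderiv ℝ g x d) t := by
      simpa using (hasDerivAt_id t).smul_const (fderiv ℝ g x d)
    exact (h2.sub_const (g x)).sub h3
  have hB : ∀ t : ℝ, HasDerivAt (fun t : ℝ => L / 2 * ‖d‖ ^ 2 * t ^ 2) (L * ‖d‖ ^ 2 * t) t := by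
    intro t
    have := ((hasDerivAt_pow 2 t).const_mul (L / 2 * ‖d‖ ^ 2))
    refine this.congr_deriv ?_
    ring
  have key : ∀ ⦃t : ℝ⦄, t ∈ Icc (0:ℝ) 1 → ‖φ t‖ ≤ L / 2 * ‖d‖ ^ 2 * t ^ 2 := by
    refine image_norm_le_of_norm_deriv_right_le_deriv_boundary
      (f := φ) (f' := fun t => fderiv ℝ g (x + t • d) d - fderiv ℝ g x d)
      (fun t _ => (hder t).continuousAt.continuousWithinAt)
      (fun t _ => (hder t).hasDerivWithinAt) ?_ hB ?_
    · simp [hφ]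
    · intro t ht
      have h1 : ‖(fderiv ℝ g (x + t • d) - fderiv ℝ g x) d‖ ≤
          ‖fderiv ℝ g (x + t • d) - fderiv ℝ g x‖ * ‖d‖ :=
        (fderiv ℝ g (x + t • d) - fderiv ℝ g x).le_opNorm d
      have h2 : ‖fderiv ℝ g (x + t • d) - fderiv ℝ g x‖ ≤ L * ‖t • d‖ := by
        simpa using hLip (x + t • d) x
      have h3 : ‖t • d‖ = t * ‖d‖ := by
        rw [norm_smul, Real.norm_eq_abs, abs_of_nonneg ht.1]
      calc ‖fderiv ℝ g (x + t • d) d - fderiv ℝ g x d‖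
          = ‖(fderiv ℝ g (x + t • d) - fderiv ℝ g x) d‖ := by
            simp [ContinuousLinearMap.sub_apply]
        _ ≤ ‖fderiv ℝ g (x + t • d) - fderiv ℝ g x‖ * ‖d‖ := h1
        _ ≤ L * ‖t • d‖ * ‖d‖ := by
            apply mul_le_mul_of_nonneg_right h2 (norm_nonneg d)
        _ = L * ‖d‖ ^ 2 * t := by rw [h3]; ring
  have := key (right_mem_Icc.2 zero_le_one)
  simpa [hφ] using this

theorem stmt5 (n : ℕ) (f : EuclideanSpace ℝ (Fin n) → ℝ) (L : ℝ) (hL : 0 < L)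
    (hf : ContDiff ℝ 2 f)
    (hLip : ∀ y z : EuclideanSpace ℝ (Fin n),
      ‖fderiv ℝ (gradient f) y - fderiv ℝ (gradient f) z‖ ≤ L * ‖y - z‖)
    (x d r : EuclideanSpace ℝ (Fin n)) (lam β α ξ ζ : ℝ)
    (hlam : 0 ≤ lam) (hβ : 1 ≤ β) (hα : 0 < α) (hξ : 0 < ξ)
    (hζ : 0 < ζ) (hζ1 : ζ ≤ 1)
    (heq : gradient f x + (fderiv ℝ (gradient f) x d + lam • d) = r)
    (hshift : lam ≤ β * ‖d‖ / α)
    (hres : ‖r‖ ≤ ξ * ‖d‖ ^ (1 + ζ)) :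
    ‖gradient f (x + d)‖ ≤ (L/2 + β/α) * ‖d‖^2 + ξ * ‖d‖ ^ (1 + ζ) := by
  have hgdiff : Differentiable ℝ (gradient f) := by
    have h1 : ContDiff ℝ 1 (gradient f) := by
      have : ContDiff ℝ 1 (fderiv ℝ f) := hf.fderiv_right (by norm_num)
      exact (InnerProductSpace.toDual ℝ (EuclideanSpace ℝ (Fin n))).symm.contDiff.comp this
    exact h1.differentiable one_ne_zero
  have htaylor := taylor_aux (gradient f) hgdiff L hL.le hLip x d
  have hdecomp : gradient f (x + d) =
      (gradient f (x + d) - gradient f x - fderiv ℝ (gradient f) x d) + (r - lam • d) := by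
    rw [← heq]; abel
  have hnorm : ‖gradient f (x + d)‖ ≤
      ‖gradient f (x + d) - gradient f x - fderiv ℝ (gradient f) x d‖ + ‖r‖ + ‖lam • d‖ := by
    conv_lhs => rw [hdecomp]
    refine (norm_add_le _ _).trans ?_
    have := norm_sub_le r (lam • d)
    linarith
  have hlamd : ‖lam • d‖ ≤ β / α * ‖d‖ ^ 2 := by
    rw [norm_smul, Real.norm_eq_abs, abs_of_nonneg hlam]
    calc lam * ‖d‖ ≤ (β * ‖d‖ / α) * ‖d‖ :=
          mul_le_mul_of_nonneg_right hshift (norm_nonneg d)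
      _ = β / α * ‖d‖ ^ 2 := by ring
  calc ‖gradient f (x + d)‖ ≤ _ := hnorm
    _ ≤ L / 2 * ‖d‖ ^ 2 + ξ * ‖d‖ ^ (1 + ζ) + β / α * ‖d‖ ^ 2 := by
        gcongr
    _ = (L/2 + β/α) * ‖d‖^2 + ξ * ‖d‖ ^ (1 + ζ) := by ring
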